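/- arXiv:2102.00100 — 3 statements merged into one kernel-verified Lean document; each statement's English description precedes it below -/
import Mathlib

section
/- Let H be a real Hilbert space, let g : [0,∞) → [0,∞) be nonincreasing, and let f : [0,∞) → H be strongly measurable and locally Bochner integrable with ∫₀^∞ g(τ) ‖f(τ)‖² dτ < ∞. Then ∫₀^∞ g(s) ‖∫₀^s e^{τ−s} f(τ) dτ‖² ds ≤ ∫₀^∞ g(τ) ‖f(τ)‖² dτ. -/
open MeasureTheory Set Real
open scoped ENNReal NNReal

private lemma auxKey_outer (τ : ℝ) :
    ∫⁻ s in Ici τ, ENNReal.ofReal (Real.exp (τ - s)) = 1 := by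
  rw [← MeasureTheory.restrict_Ioi_eq_restrict_Ici]
  rw [← ofReal_integral_eq_lintegral_ofReal]
  · have : ∀ s : ℝ, Real.exp (τ - s) = Real.exp τ * Real.exp (-s) := by
      intro s; rw [← Real.exp_add]; ring_nf
    simp_rw [this]
    rw [MeasureTheory.integral_const_mul, integral_exp_neg_Ioi, ← Real.exp_add]
    simp
  · have : ∀ s : ℝ, Real.exp (τ - s) = Real.exp τ * Real.exp (-1 * s) := by
      intro s; rw [← Real.exp_add]; ring_nf
    simp_rw [this]
    exact (exp_neg_integrableOn_Ioi τ one_pos).const_mul _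
  · exact Filter.Eventually.of_forall fun s => (Real.exp_pos _).le

private lemma auxKey_inner {s : ℝ} (hs : 0 ≤ s) :
    ∫⁻ τ in Ioc 0 s, ENNReal.ofReal (Real.exp (τ - s)) ≤ 1 := by
  rw [← ofReal_integral_eq_lintegral_ofReal]
  · have h1 : ∫ τ in Ioc (0:ℝ) s, Real.exp (τ - s) = ∫ τ in (0:ℝ)..s, Real.exp (τ - s) :=
      (intervalIntegral.integral_of_le hs).symm
    rw [h1, intervalIntegral.integral_comp_sub_right (fun x => Real.exp x) s,
      integral_exp]
    simp only [zero_sub, sub_self, Real.exp_zero]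
    rw [ENNReal.ofReal_le_one]
    have := Real.exp_pos (-s)
    linarith
  · exact (Real.continuous_exp.comp (by continuity)).integrableOn_Ioc
  · exact Filter.Eventually.of_forall fun τ => (Real.exp_pos _).le

private lemma auxKey_CS {H : Type*} [NormedAddCommGroup H] (f : ℝ → H) {s : ℝ} (hs : 0 < s)
    (hf : AEMeasurable (fun τ => (‖f τ‖₊ : ℝ≥0∞)) (volume.restrict (Ioc 0 s))) :
    (∫⁻ τ in Ioc 0 s, ENNReal.ofReal (Real.exp (τ - s)) * ‖f τ‖₊) ^ 2
      ≤ ∫⁻ τ in Ioc 0 s, ENNReal.ofReal (Real.exp (τ - s)) * (‖f τ‖₊ : ℝ≥0∞) ^ 2 := by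
  set a : ℝ → ℝ≥0∞ := fun τ => ENNReal.ofReal (Real.exp ((τ - s) / 2)) with ha_def
  set b : ℝ → ℝ≥0∞ := fun τ => a τ * ‖f τ‖₊ with hb_def
  have ha : AEMeasurable a (volume.restrict (Ioc 0 s)) :=
    ((Real.continuous_exp.comp (by continuity)).measurable.ennreal_ofReal).aemeasurable
  have hb : AEMeasurable b (volume.restrict (Ioc 0 s)) := ha.mul hf
  have haa : ∀ τ, a τ * a τ = ENNReal.ofReal (Real.exp (τ - s)) := by
    intro τ
    rw [ha_def, ← ENNReal.ofReal_mul (Real.exp_pos _).le, ← Real.exp_add, add_halves]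
  have hsq : ∀ x : ℝ≥0∞, x ^ (2:ℝ) = x * x := by
    intro x
    rw [show (2:ℝ) = ((2:ℕ):ℝ) by norm_num, ENNReal.rpow_natCast]
    ring
  have hpq : Real.HolderConjugate 2 2 := Real.HolderConjugate.two_two
  have CS := ENNReal.lintegral_mul_le_Lp_mul_Lq (volume.restrict (Ioc 0 s)) hpq ha hb
  have hX : (∫⁻ τ in Ioc 0 s, a τ ^ (2:ℝ))
      = ∫⁻ τ in Ioc 0 s, ENNReal.ofReal (Real.exp (τ - s)) := by
    refine lintegral_congr fun τ => ?_
    rw [hsq, haa]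
  have hY : (∫⁻ τ in Ioc 0 s, b τ ^ (2:ℝ))
      = ∫⁻ τ in Ioc 0 s, ENNReal.ofReal (Real.exp (τ - s)) * (‖f τ‖₊ : ℝ≥0∞) ^ 2 := by
    refine lintegral_congr fun τ => ?_
    rw [hsq, hb_def]
    simp only
    rw [show a τ * ↑‖f τ‖₊ * (a τ * ↑‖f τ‖₊) = (a τ * a τ) * (↑‖f τ‖₊ * ↑‖f τ‖₊) by ring, haa]
    ring
  have hab : (∫⁻ τ in Ioc 0 s, ENNReal.ofReal (Real.exp (τ - s)) * ‖f τ‖₊)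
      = ∫⁻ τ in Ioc 0 s, (a * b) τ := by
    refine lintegral_congr fun τ => ?_
    simp only [Pi.mul_apply, hb_def, ← mul_assoc, haa]
  rw [hab]
  calc (∫⁻ τ in Ioc 0 s, (a * b) τ) ^ 2
      ≤ ((∫⁻ τ in Ioc 0 s, a τ ^ (2:ℝ)) ^ (1/(2:ℝ))
          * (∫⁻ τ in Ioc 0 s, b τ ^ (2:ℝ)) ^ (1/(2:ℝ))) ^ 2 :=
        pow_le_pow_left' CS 2
    _ = (∫⁻ τ in Ioc 0 s, a τ ^ (2:ℝ)) * (∫⁻ τ in Ioc 0 s, b τ ^ (2:ℝ)) := by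
        rw [mul_pow, ← ENNReal.rpow_natCast (_ ^ (1/(2:ℝ))), ← ENNReal.rpow_natCast (_ ^ (1/(2:ℝ))),
          ← ENNReal.rpow_mul, ← ENNReal.rpow_mul]
        norm_num
    _ ≤ 1 * (∫⁻ τ in Ioc 0 s, b τ ^ (2:ℝ)) := by
        gcongr
        rw [hX]; exact auxKey_inner hs.le
    _ = ∫⁻ τ in Ioc 0 s, ENNReal.ofReal (Real.exp (τ - s)) * (‖f τ‖₊ : ℝ≥0∞) ^ 2 := by
        rw [one_mul, hY]

private lemma auxKey_pointwise {H : Type*} [NormedAddCommGroup H] [NormedSpace ℝ H]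
    [CompleteSpace H] (g : ℝ → ℝ) (f : ℝ → H)
    (hg_nonneg : ∀ s, 0 ≤ s → 0 ≤ g s)
    (hg_mono : AntitoneOn g (Ici 0))
    (hf_meas : AEStronglyMeasurable f (volume.restrict (Ici 0)))
    {s : ℝ} (hs : 0 < s) :
    ENNReal.ofReal (g s * ‖∫ τ in (0:ℝ)..s, Real.exp (τ - s) • f τ‖ ^ 2)
      ≤ ∫⁻ τ in Ioc 0 s, ENNReal.ofReal (Real.exp (τ - s))
          * ENNReal.ofReal (g τ * ‖f τ‖ ^ 2) := by
  have hsub : Ioc (0:ℝ) s ⊆ Ici 0 := Ioc_subset_Icc_self.trans Icc_subset_Ici_self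
  have hN : AEMeasurable (fun τ => (‖f τ‖₊ : ℝ≥0∞)) (volume.restrict (Ioc 0 s)) :=
    (hf_meas.mono_measure (Measure.restrict_mono hsub le_rfl)).enorm
  have hFs : (∫ τ in (0:ℝ)..s, Real.exp (τ - s) • f τ)
      = ∫ τ in Ioc 0 s, Real.exp (τ - s) • f τ := intervalIntegral.integral_of_le hs.le
  have step1 : (‖∫ τ in Ioc 0 s, Real.exp (τ - s) • f τ‖₊ : ℝ≥0∞)
      ≤ ∫⁻ τ in Ioc 0 s, ENNReal.ofReal (Real.exp (τ - s)) * ‖f τ‖₊ := by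
    refine le_trans (enorm_integral_le_lintegral_enorm _) (le_of_eq ?_)
    refine lintegral_congr fun τ => ?_
    rw [enorm_smul, Real.enorm_eq_ofReal (Real.exp_pos _).le, enorm_eq_nnnorm]
  have hkey : ENNReal.ofReal (g s * ‖∫ τ in (0:ℝ)..s, Real.exp (τ - s) • f τ‖ ^ 2)
      = ENNReal.ofReal (g s) * (‖∫ τ in Ioc 0 s, Real.exp (τ - s) • f τ‖₊ : ℝ≥0∞) ^ 2 := by
    rw [hFs, ENNReal.ofReal_mul (hg_nonneg s hs.le), ENNReal.ofReal_pow (norm_nonneg _),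
      ofReal_norm, enorm_eq_nnnorm]
  rw [hkey]
  calc ENNReal.ofReal (g s) * (‖∫ τ in Ioc 0 s, Real.exp (τ - s) • f τ‖₊ : ℝ≥0∞) ^ 2
      ≤ ENNReal.ofReal (g s)
        * (∫⁻ τ in Ioc 0 s, ENNReal.ofReal (Real.exp (τ - s)) * ‖f τ‖₊) ^ 2 := by
        gcongr
    _ ≤ ENNReal.ofReal (g s)
        * ∫⁻ τ in Ioc 0 s, ENNReal.ofReal (Real.exp (τ - s)) * (‖f τ‖₊ : ℝ≥0∞) ^ 2 := by
        gcongr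
        exact auxKey_CS f hs hN
    _ = ∫⁻ τ in Ioc 0 s, ENNReal.ofReal (g s)
          * (ENNReal.ofReal (Real.exp (τ - s)) * (‖f τ‖₊ : ℝ≥0∞) ^ 2) :=
        (lintegral_const_mul' _ _ ENNReal.ofReal_ne_top).symm
    _ ≤ ∫⁻ τ in Ioc 0 s, ENNReal.ofReal (Real.exp (τ - s))
          * ENNReal.ofReal (g τ * ‖f τ‖ ^ 2) := by
        refine lintegral_mono_ae ((ae_restrict_iff' measurableSet_Ioc).2
          (Filter.Eventually.of_forall fun τ hτ => ?_))
        rw [ENNReal.ofReal_mul (hg_nonneg τ hτ.1.le), ENNReal.ofReal_pow (norm_nonneg _),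
          ofReal_norm, enorm_eq_nnnorm]
        rw [show ENNReal.ofReal (g s) * (ENNReal.ofReal (Real.exp (τ - s)) * (‖f τ‖₊ : ℝ≥0∞) ^ 2)
            = ENNReal.ofReal (Real.exp (τ - s))
              * (ENNReal.ofReal (g s) * (‖f τ‖₊ : ℝ≥0∞) ^ 2) by ring]
        gcongr
        exact hg_mono (hsub hτ) (le_of_lt hs) hτ.2

private lemma auxKey_meas {H : Type*} [NormedAddCommGroup H] [NormedSpace ℝ H] [CompleteSpace H]
    (f : ℝ → H)
    (hf_meas : AEStronglyMeasurable f (volume.restrict (Ici 0)))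
    (hf_loc : LocallyIntegrableOn f (Ici 0)) :
    AEStronglyMeasurable (fun s => ∫ τ in (0:ℝ)..s, Real.exp (τ - s) • f τ)
      (volume.restrict (Ioi 0)) := by
  set G : ℝ → H := (Ioi 0).indicator (fun τ => Real.exp τ • f τ) with hG_def
  have hsm : AEStronglyMeasurable (fun τ => Real.exp τ • f τ) (volume.restrict (Ioi 0)) :=
    Real.continuous_exp.aestronglyMeasurable.smul
      (hf_meas.mono_measure (Measure.restrict_mono Ioi_subset_Ici_self le_rfl))
  have hGint : ∀ a b, IntervalIntegrable G volume a b := by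
    intro a b
    rw [intervalIntegrable_iff]
    set M := max (max a b) 1 with hM
    have hfI : IntegrableOn f (Icc 0 M) :=
      hf_loc.integrableOn_compact_subset Icc_subset_Ici_self isCompact_Icc
    have hint : IntegrableOn (fun τ => Real.exp τ • f τ) (Icc 0 M) := by
      refine Integrable.mono' (hfI.norm.const_mul (Real.exp M)) ?_ ?_
      · exact Real.continuous_exp.aestronglyMeasurable.smul
          (hf_meas.mono_measure (Measure.restrict_mono Icc_subset_Ici_self le_rfl))
      · refine (ae_restrict_iff' measurableSet_Icc).2 (Filter.Eventually.of_forall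
          fun τ hτ => ?_)
        rw [norm_smul, Real.norm_eq_abs, abs_of_pos (Real.exp_pos τ)]
        exact mul_le_mul_of_nonneg_right (Real.exp_le_exp.2 hτ.2) (norm_nonneg _)
    rw [hG_def, IntegrableOn, integrable_indicator_iff measurableSet_Ioi, IntegrableOn,
      Measure.restrict_restrict measurableSet_Ioi]
    refine hint.mono_set ?_
    rintro x ⟨hx1, hx2⟩
    exact ⟨le_of_lt hx1, le_trans hx2.2 (le_max_left _ _)⟩
  have hP : Continuous (fun x : ℝ => ∫ t in (0:ℝ)..x, G t) :=
    intervalIntegral.continuous_primitive hGint 0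
  have heq : ∀ s ∈ Ioi (0:ℝ),
      (∫ τ in (0:ℝ)..s, Real.exp (τ - s) • f τ)
        = Real.exp (-s) • ∫ t in (0:ℝ)..s, G t := by
    intro s hs
    rw [intervalIntegral.integral_of_le (le_of_lt hs),
      intervalIntegral.integral_of_le (le_of_lt hs), ← integral_smul]
    refine setIntegral_congr_fun measurableSet_Ioc fun τ hτ => ?_
    rw [hG_def, indicator_of_mem (show τ ∈ Ioi (0:ℝ) from hτ.1), smul_smul, ← Real.exp_add]
    ring_nf
  refine AEStronglyMeasurable.congr
    (((Real.continuous_exp.comp continuous_neg).smul hP).aestronglyMeasurable.restrict) ?_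
  exact (ae_restrict_iff' measurableSet_Ioi).2
    (Filter.Eventually.of_forall fun s hs => (heq s hs).symm)

/-- The key weighted estimate used in the surjectivity part of the well-posedness proof:
for a nonincreasing nonnegative weight `g` on `[0,∞)` and a locally integrable `f` with
`∫₀^∞ g τ ‖f τ‖² dτ < ∞`, one has
`∫₀^∞ g s ‖∫₀^s e^{τ-s} f τ dτ‖² ds ≤ ∫₀^∞ g τ ‖f τ‖² dτ`. -/
theorem stmt0 {H : Type*} [NormedAddCommGroup H] [InnerProductSpace ℝ H] [CompleteSpace H]
    (g : ℝ → ℝ) (f : ℝ → H)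
    (hg_nonneg : ∀ s, 0 ≤ s → 0 ≤ g s)
    (hg_mono : AntitoneOn g (Ici 0))
    (hf_meas : AEStronglyMeasurable f (volume.restrict (Ici 0)))
    (hf_loc : LocallyIntegrableOn f (Ici 0))
    (hfin : IntegrableOn (fun τ => g τ * ‖f τ‖ ^ 2) (Ioi 0)) :
    ∫ s in Ioi (0:ℝ), g s * ‖∫ τ in (0:ℝ)..s, Real.exp (τ - s) • f τ‖ ^ 2
      ≤ ∫ τ in Ioi (0:ℝ), g τ * ‖f τ‖ ^ 2 := by
  have hg_meas : AEMeasurable g (volume.restrict (Ioi 0)) :=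
    aemeasurable_restrict_of_antitoneOn measurableSet_Ioi (hg_mono.mono Ioi_subset_Ici_self)
  have hf_meas' : AEStronglyMeasurable f (volume.restrict (Ioi 0)) :=
    hf_meas.mono_measure (Measure.restrict_mono Ioi_subset_Ici_self le_rfl)
  have hΦ : AEMeasurable (fun τ => ENNReal.ofReal (g τ * ‖f τ‖ ^ 2))
      (volume.restrict (Ioi 0)) :=
    (hg_meas.mul ((hf_meas'.norm.aemeasurable).pow_const 2)).ennreal_ofReal
  set k : ℝ → ℝ≥0∞ := hΦ.mk _ with hk_def
  have hk_meas : Measurable k := hΦ.measurable_mk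
  have hk_ae : (fun τ => ENNReal.ofReal (g τ * ‖f τ‖ ^ 2)) =ᵐ[volume.restrict (Ioi 0)] k :=
    hΦ.ae_eq_mk
  have hΨ_meas : Measurable (fun p : ℝ × ℝ =>
      (Ioc 0 p.1).indicator (fun τ => ENNReal.ofReal (Real.exp (τ - p.1)) * k τ) p.2) := by
    have huncurry : (fun p : ℝ × ℝ =>
        (Ioc 0 p.1).indicator (fun τ => ENNReal.ofReal (Real.exp (τ - p.1)) * k τ) p.2)
        = fun p : ℝ × ℝ =>
        if p.2 ∈ Ioc 0 p.1 then ENNReal.ofReal (Real.exp (p.2 - p.1)) * k p.2 else 0 := by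
      ext p
      simp [indicator_apply]
    rw [huncurry]
    have hset : MeasurableSet {p : ℝ × ℝ | p.2 ∈ Ioc 0 p.1} := by
      have : {p : ℝ × ℝ | p.2 ∈ Ioc 0 p.1}
          = {p : ℝ × ℝ | 0 < p.2} ∩ {p : ℝ × ℝ | p.2 ≤ p.1} := by
        ext p; simp [mem_Ioc, and_comm]
      rw [this]
      exact (measurableSet_lt measurable_const measurable_snd).inter
        (measurableSet_le measurable_snd measurable_fst)
    exact Measurable.ite hset
      ((ENNReal.measurable_ofReal.comp
        (Real.continuous_exp.comp (continuous_snd.sub continuous_fst)).measurable).mul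
        (hk_meas.comp measurable_snd))
      measurable_const
  have key : (∫⁻ s in Ioi (0:ℝ),
        ENNReal.ofReal (g s * ‖∫ τ in (0:ℝ)..s, Real.exp (τ - s) • f τ‖ ^ 2))
      ≤ ENNReal.ofReal (∫ τ in Ioi (0:ℝ), g τ * ‖f τ‖ ^ 2) := by
    have h_nn : 0 ≤ᵐ[volume.restrict (Ioi 0)] fun τ => g τ * ‖f τ‖ ^ 2 :=
      (ae_restrict_iff' measurableSet_Ioi).2 (Filter.Eventually.of_forall
        fun τ hτ => mul_nonneg (hg_nonneg τ (le_of_lt hτ)) (sq_nonneg _))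
    calc (∫⁻ s in Ioi (0:ℝ),
          ENNReal.ofReal (g s * ‖∫ τ in (0:ℝ)..s, Real.exp (τ - s) • f τ‖ ^ 2))
        ≤ ∫⁻ s in Ioi (0:ℝ), ∫⁻ τ in Ioc 0 s,
            ENNReal.ofReal (Real.exp (τ - s)) * ENNReal.ofReal (g τ * ‖f τ‖ ^ 2) := by
          refine lintegral_mono_ae ((ae_restrict_iff' measurableSet_Ioi).2
            (Filter.Eventually.of_forall fun s hs => ?_))
          exact auxKey_pointwise g f hg_nonneg hg_mono hf_meas hs
      _ = ∫⁻ s in Ioi (0:ℝ), ∫⁻ τ in Ioc 0 s,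
            ENNReal.ofReal (Real.exp (τ - s)) * k τ := by
          refine lintegral_congr fun s => lintegral_congr_ae ?_
          have h1 : (fun τ => ENNReal.ofReal (g τ * ‖f τ‖ ^ 2))
              =ᵐ[volume.restrict (Ioc 0 s)] k :=
            ae_restrict_of_ae_restrict_of_subset Ioc_subset_Ioi_self hk_ae
          exact h1.mono fun τ hτ => congrArg (fun x => ENNReal.ofReal (Real.exp (τ - s)) * x) hτ
      _ = ∫⁻ s in Ioi (0:ℝ), ∫⁻ τ in Ioi (0:ℝ),
            (Ioc 0 s).indicator (fun τ => ENNReal.ofReal (Real.exp (τ - s)) * k τ) τ := by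
          refine lintegral_congr fun s => ?_
          rw [lintegral_indicator measurableSet_Ioc,
            Measure.restrict_restrict measurableSet_Ioc,
            inter_eq_self_of_subset_left Ioc_subset_Ioi_self]
      _ = ∫⁻ τ in Ioi (0:ℝ), ∫⁻ s in Ioi (0:ℝ),
            (Ioc 0 s).indicator (fun τ => ENNReal.ofReal (Real.exp (τ - s)) * k τ) τ :=
          lintegral_lintegral_swap hΨ_meas.aemeasurable
      _ = ∫⁻ τ in Ioi (0:ℝ), k τ := by
          refine lintegral_congr_ae ((ae_restrict_iff' measurableSet_Ioi).2
            (Filter.Eventually.of_forall fun τ hτ => ?_))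
          have hτ' : (0:ℝ) < τ := hτ
          have hrw : ∀ s : ℝ, (Ioc 0 s).indicator
                (fun τ => ENNReal.ofReal (Real.exp (τ - s)) * k τ) τ
              = (Ici τ).indicator (fun s => ENNReal.ofReal (Real.exp (τ - s)) * k τ) s := by
            intro s
            by_cases h : τ ≤ s
            · simp [indicator_apply, mem_Ioc, mem_Ici, hτ', h]
            · simp [indicator_apply, mem_Ioc, mem_Ici, h]
          calc (∫⁻ s in Ioi (0:ℝ), (Ioc 0 s).indicator
                  (fun τ => ENNReal.ofReal (Real.exp (τ - s)) * k τ) τ)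
              = ∫⁻ s in Ioi (0:ℝ),
                  (Ici τ).indicator (fun s => ENNReal.ofReal (Real.exp (τ - s)) * k τ) s :=
                lintegral_congr hrw
            _ = ∫⁻ s in Ici τ, ENNReal.ofReal (Real.exp (τ - s)) * k τ := by
                rw [lintegral_indicator measurableSet_Ici,
                  Measure.restrict_restrict measurableSet_Ici,
                  inter_eq_self_of_subset_left (Ici_subset_Ioi.mpr hτ')]
            _ = k τ := by
                rw [lintegral_mul_const _ (show Measurable
                    fun s : ℝ => ENNReal.ofReal (Real.exp (τ - s)) from
                    (ENNReal.measurable_ofReal.comp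
                      (Real.continuous_exp.comp (continuous_const.sub continuous_id)).measurable)),
                  auxKey_outer τ, one_mul]
      _ = ∫⁻ τ in Ioi (0:ℝ), ENNReal.ofReal (g τ * ‖f τ‖ ^ 2) :=
          lintegral_congr_ae hk_ae.symm
      _ = ENNReal.ofReal (∫ τ in Ioi (0:ℝ), g τ * ‖f τ‖ ^ 2) :=
          (ofReal_integral_eq_lintegral_ofReal hfin h_nn).symm
  have hRHS_nonneg : 0 ≤ ∫ τ in Ioi (0:ℝ), g τ * ‖f τ‖ ^ 2 :=
    setIntegral_nonneg measurableSet_Ioi fun τ hτ =>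
      mul_nonneg (hg_nonneg τ (le_of_lt hτ)) (sq_nonneg _)
  have hφ_meas : AEStronglyMeasurable
      (fun s => g s * ‖∫ τ in (0:ℝ)..s, Real.exp (τ - s) • f τ‖ ^ 2)
      (volume.restrict (Ioi 0)) :=
    (hg_meas.mul (((auxKey_meas f hf_meas hf_loc).norm.aemeasurable).pow_const 2)
      ).aestronglyMeasurable
  have hφ_nn : 0 ≤ᵐ[volume.restrict (Ioi 0)]
      fun s => g s * ‖∫ τ in (0:ℝ)..s, Real.exp (τ - s) • f τ‖ ^ 2 :=
    (ae_restrict_iff' measurableSet_Ioi).2 (Filter.Eventually.of_forall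
      fun s hs => mul_nonneg (hg_nonneg s (le_of_lt hs)) (sq_nonneg _))
  rw [integral_eq_lintegral_of_nonneg_ae hφ_nn hφ_meas]
  have hmono := ENNReal.toReal_mono ENNReal.ofReal_ne_top key
  rwa [ENNReal.toReal_ofReal hRHS_nonneg] at hmono
end

section
/- Let G : [0,∞) → [0,∞) be increasing, strictly convex, of class C¹ on [0,∞) and C² on (0,∞), with G(0) = G'(0) = 0 and G'(t) → ∞ as t → ∞, so that G' is an increasing bijection of [0,∞). Let g : [0,∞) → [0,∞) be differentiable and nonincreasing with g'(s) < 0 for all s ≥ 0, and assume m₁ := sup_{s ≥ 0} g(s)/G⁻¹(−g'(s)) < ∞. Let w, M : [0,∞) → [0,∞) be measurable with w(s) ≤ M(s) for all s ≥ 0, and assume m₂ := ∫₀^∞ M(s) g(s)/G⁻¹(−g'(s)) ds < ∞. Then for every θ > 0, ∫₀^∞ g(s) w(s) ds ≤ (m₁ / G'(θ)) ∫₀^∞ (−g'(s)) w(s) ds + θ · m₂. -/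
open MeasureTheory Set Filter

/-- The abstract core of Lemma 3.5 of the paper: for `G` as in (H2) with inverse `Ginv`,
a differentiable nonincreasing kernel `g` with `g' < 0`,
`m₁ := sup_{s ≥ 0} g(s)/G⁻¹(−g'(s)) < ∞` and
`m₂ := ∫₀^∞ M(s) g(s)/G⁻¹(−g'(s)) ds < ∞`, and measurable `0 ≤ w ≤ M`, one has for any
`θ > 0`:
`∫₀^∞ g(s) w(s) ds ≤ (m₁/G'(θ)) ∫₀^∞ (−g'(s)) w(s) ds + θ m₂`. -/
theorem stmt8 (G Ginv g w M : ℝ → ℝ)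
    (hG_maps : ∀ s, 0 ≤ s → 0 ≤ G s)
    (hG_mono : StrictMonoOn G (Ici 0))
    (hG_conv : StrictConvexOn ℝ (Ici 0) G)
    (hG_c1 : ContDiffOn ℝ 1 G (Ici 0))
    (hG_c2 : ContDiffOn ℝ 2 G (Ioi 0))
    (hG0 : G 0 = 0) (hG'0 : deriv G 0 = 0)
    (hG'top : Tendsto (deriv G) atTop atTop)
    (hG'_mono : StrictMonoOn (deriv G) (Ici 0))
    (hGinv_maps : ∀ s, 0 ≤ s → 0 ≤ Ginv s)
    (hGinv_left : ∀ s, 0 ≤ s → G (Ginv s) = s)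
    (hGinv_right : ∀ s, 0 ≤ s → Ginv (G s) = s)
    (hg_nonneg : ∀ s, 0 ≤ s → 0 ≤ g s)
    (hg_diff : Differentiable ℝ g)
    (hg_mono : AntitoneOn g (Ici 0))
    (hg'_neg : ∀ s, 0 ≤ s → deriv g s < 0)
    (hm₁ : BddAbove ((fun s => g s / Ginv (-(deriv g s))) '' Ici 0))
    (hw_meas : Measurable w) (hM_meas : Measurable M)
    (hw_nonneg : ∀ s, 0 ≤ s → 0 ≤ w s)
    (hM_nonneg : ∀ s, 0 ≤ s → 0 ≤ M s)
    (hwM : ∀ s, 0 ≤ s → w s ≤ M s)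
    (hm₂ : IntegrableOn (fun s => M s * (g s / Ginv (-(deriv g s)))) (Ioi 0))
    (hgw : IntegrableOn (fun s => g s * w s) (Ioi 0))
    (hg'w : IntegrableOn (fun s => -(deriv g s) * w s) (Ioi 0)) :
    ∀ θ : ℝ, 0 < θ →
      ∫ s in Ioi (0:ℝ), g s * w s
        ≤ (sSup ((fun s => g s / Ginv (-(deriv g s))) '' Ici 0) / deriv G θ)
            * (∫ s in Ioi (0:ℝ), -(deriv g s) * w s)
          + θ * ∫ s in Ioi (0:ℝ), M s * (g s / Ginv (-(deriv g s))) := by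
  intro θ hθ
  set F : ℝ → ℝ := fun s => g s / Ginv (-(deriv g s)) with hFdef
  set m₁ := sSup (F '' Ici 0) with hm₁def
  have hG'θ : 0 < deriv G θ := by
    have := hG'_mono (self_mem_Ici) (le_of_lt hθ) hθ
    rwa [hG'0] at this
  have hF0 : ∀ s, 0 ≤ s → 0 ≤ F s := by
    intro s hs
    have hg's : 0 < -(deriv g s) := by linarith [hg'_neg s hs]
    exact div_nonneg (hg_nonneg s hs) (hGinv_maps _ hg's.le)
  have hm₁0 : 0 ≤ m₁ := le_trans (hF0 0 le_rfl) (le_csSup hm₁ ⟨0, self_mem_Ici, rfl⟩)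
  have key : ∀ s ∈ Ioi (0:ℝ), g s * w s ≤
      (m₁ / deriv G θ) * (-(deriv g s) * w s) + θ * (M s * F s) := by
    intro s hs
    have hs0 : (0:ℝ) ≤ s := le_of_lt hs
    have hg's : 0 < -(deriv g s) := by linarith [hg'_neg s hs0]
    set x := Ginv (-(deriv g s)) with hxdef
    have hx0 : 0 ≤ x := hGinv_maps _ hg's.le
    have hGx : G x = -(deriv g s) := hGinv_left _ hg's.le
    have hxpos : 0 < x := by
      rcases hx0.lt_or_eq with h | h
      · exact h
      · exfalso; rw [← h, hG0] at hGx; linarith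
    have hr0 : 0 ≤ F s := hF0 s hs0
    have hrm : F s ≤ m₁ := le_csSup hm₁ ⟨s, hs0, rfl⟩
    have hgsr : g s = F s * x := by
      simp only [hFdef, ← hxdef]
      rw [div_mul_cancel₀ _ hxpos.ne']
    have hw0 : 0 ≤ w s := hw_nonneg s hs0
    have hwle : w s ≤ M s := hwM s hs0
    rcases le_or_gt x θ with hc | hc
    · have h1 : g s * w s ≤ θ * (M s * F s) := by
        rw [hgsr]
        nlinarith [mul_nonneg (mul_nonneg hr0 (sub_nonneg.2 hc)) hw0,
          mul_nonneg (mul_nonneg hθ.le hr0) (sub_nonneg.2 hwle)]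
      have h2 : 0 ≤ (m₁ / deriv G θ) * (-(deriv g s) * w s) :=
        mul_nonneg (div_nonneg hm₁0 hG'θ.le) (mul_nonneg hg's.le hw0)
      linarith
    · have hdiff : DifferentiableOn ℝ G (Ioo θ x) := by
        intro y hy
        exact ((hG_c1.differentiableOn one_ne_zero).differentiableAt
          (Ici_mem_nhds (by linarith [hy.1] : (0:ℝ) < y))).differentiableWithinAt
      have hcont : ContinuousOn G (Icc θ x) :=
        hG_c1.continuousOn.mono (fun y hy => le_trans hθ.le hy.1)
      obtain ⟨c, hcmem, hceq⟩ := exists_deriv_eq_slope G hc hcont hdiff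
      have hc' : deriv G θ ≤ deriv G c :=
        (hG'_mono hθ.le (by linarith [hcmem.1] : (0:ℝ) ≤ c) hcmem.1).le
      have hslope : deriv G θ * (x - θ) ≤ G x - G θ := by
        have hxt : 0 < x - θ := by linarith
        have := hceq
        rw [eq_div_iff hxt.ne'] at this
        nlinarith
      have hGθ0 : 0 ≤ G θ := hG_maps θ hθ.le
      have h3 : F s * (x - θ) * w s ≤ (m₁ / deriv G θ) * (-(deriv g s) * w s) := by
        have hkey : F s * (x - θ) ≤ m₁ / deriv G θ * (-(deriv g s)) := by
          have heq : m₁ / deriv G θ * (-(deriv g s)) = m₁ * (-(deriv g s)) / deriv G θ := by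
            ring
          rw [heq, le_div_iff₀ hG'θ]
          have e1 : 0 ≤ F s * (G x - G θ - deriv G θ * (x - θ)) :=
            mul_nonneg hr0 (by linarith)
          have e2 : 0 ≤ (m₁ - F s) * G x := mul_nonneg (by linarith) (by linarith)
          have e3 : 0 ≤ F s * G θ := mul_nonneg hr0 hGθ0
          nlinarith [e1, e2, e3, hGx]
        nlinarith [mul_nonneg (sub_nonneg.2 hkey) hw0]
      have h4 : F s * θ * w s ≤ θ * (M s * F s) := by
        nlinarith [mul_nonneg (mul_nonneg hθ.le hr0) (sub_nonneg.2 hwle)]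
      rw [hgsr]
      nlinarith
  have hint1 : IntegrableOn (fun s => (m₁ / deriv G θ) * (-(deriv g s) * w s)) (Ioi (0:ℝ)) :=
    hg'w.const_mul _
  have hint2 : IntegrableOn (fun s => θ * (M s * F s)) (Ioi (0:ℝ)) := hm₂.const_mul _
  calc ∫ s in Ioi (0:ℝ), g s * w s
      ≤ ∫ s in Ioi (0:ℝ), ((m₁ / deriv G θ) * (-(deriv g s) * w s) + θ * (M s * F s)) :=
        setIntegral_mono_on hgw (hint1.add hint2) measurableSet_Ioi key
    _ = (m₁ / deriv G θ) * (∫ s in Ioi (0:ℝ), -(deriv g s) * w s)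
          + θ * ∫ s in Ioi (0:ℝ), M s * F s := by
        rw [integral_add hint1 hint2, integral_const_mul, integral_const_mul]
end

section
/- Let H be a real inner product space, let (aⁿ)_{n∈ℤ} be a family of elements of H, let (cʲ)_{j≥1} be real numbers, let N ≥ 1 and n ∈ ℤ, and set z^{m,j} := a^m − a^{m−j} for m ∈ ℤ, j ≥ 0. Then Σ_{j=1}^N cʲ ⟨a^{n+1−j}, a^{n+1} − aⁿ⟩ = (1/2)(Σ_{j=1}^N cʲ)(‖a^{n+1}‖² − ‖aⁿ‖²) − (1/2) Σ_{j=1}^N cʲ (‖z^{n+1,j}‖² − ‖z^{n,j}‖²) + (1/2) Σ_{j=1}^N (c^{j+1} − cʲ) ‖z^{n,j}‖² − (1/2) c^{N+1} ‖z^{n,N}‖². -/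
/-- The abstract summation-by-parts identity underlying Lemma 4.1 of the paper,
with `z^{m,j} = a^m − a^{m−j}`:
`Σ_{j=1}^N cʲ ⟨a^{n+1−j}, a^{n+1} − aⁿ⟩
  = ½(Σ cʲ)(‖a^{n+1}‖² − ‖aⁿ‖²) − ½ Σ cʲ(‖z^{n+1,j}‖² − ‖z^{n,j}‖²)
    + ½ Σ (c^{j+1} − cʲ)‖z^{n,j}‖² − ½ c^{N+1}‖z^{n,N}‖²`. -/
theorem stmt12 {H : Type*} [NormedAddCommGroup H] [InnerProductSpace ℝ H]
    (a : ℤ → H) (c : ℕ → ℝ) (N : ℕ) (hN : 1 ≤ N) (n : ℤ)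
    (z : ℤ → ℕ → H) (hz : ∀ m : ℤ, ∀ j : ℕ, z m j = a m - a (m - j)) :
    ∑ j ∈ Finset.Icc 1 N, c j * (inner ℝ (a (n + 1 - j)) (a (n + 1) - a n) : ℝ)
      = (1 / 2) * (∑ j ∈ Finset.Icc 1 N, c j) * (‖a (n + 1)‖ ^ 2 - ‖a n‖ ^ 2)
        - (1 / 2) * ∑ j ∈ Finset.Icc 1 N,
            c j * (‖z (n + 1) j‖ ^ 2 - ‖z n j‖ ^ 2)
        + (1 / 2) * ∑ j ∈ Finset.Icc 1 N, (c (j + 1) - c j) * ‖z n j‖ ^ 2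
        - (1 / 2) * c (N + 1) * ‖z n N‖ ^ 2 := by
  have hz0 : z n 0 = 0 := by rw [hz]; simp
  -- pointwise identity
  have key : ∀ j ∈ Finset.Icc 1 N,
      c j * (inner ℝ (a (n + 1 - j)) (a (n + 1) - a n) : ℝ)
      = (1/2) * c j * (‖a (n+1)‖^2 - ‖a n‖^2)
        - (1/2) * (c j * ‖z (n+1) j‖^2 - c j * ‖z n (j-1)‖^2) := by
    intro j hj
    obtain ⟨hj1, _⟩ := Finset.mem_Icc.mp hj
    have hcast : ((j - 1 : ℕ) : ℤ) = (j : ℤ) - 1 := by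
      push_cast [hj1]; ring
    have harg : n - ((j : ℤ) - 1) = n + 1 - j := by ring
    rw [hz, hz, hcast, harg]
    have e1 := @norm_sub_sq_real H _ _ (a (n+1)) (a (n+1-(j:ℤ)))
    have e2 := @norm_sub_sq_real H _ _ (a n) (a (n+1-(j:ℤ)))
    have hinner : (inner ℝ (a (n + 1 - (j:ℤ))) (a (n + 1) - a n) : ℝ)
        = (1/2) * (‖a (n+1)‖^2 - ‖a n‖^2)
          - (1/2) * (‖a (n+1) - a (n+1-(j:ℤ))‖^2 - ‖a n - a (n+1-(j:ℤ))‖^2) := by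
      rw [inner_sub_right]
      rw [real_inner_comm] at e1 e2
      linarith
    rw [hinner]; ring
  rw [Finset.sum_congr rfl key, Finset.sum_sub_distrib]
  have h1 : ∑ x ∈ Finset.Icc 1 N, (1:ℝ)/2 * c x * (‖a (n+1)‖^2 - ‖a n‖^2)
      = 1/2 * (∑ x ∈ Finset.Icc 1 N, c x) * (‖a (n+1)‖^2 - ‖a n‖^2) := by
    rw [← Finset.sum_mul, ← Finset.mul_sum]
  have h2 : ∑ x ∈ Finset.Icc 1 N, (1:ℝ)/2 * (c x * ‖z (n+1) x‖^2 - c x * ‖z n (x-1)‖^2)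
      = 1/2 * ((∑ x ∈ Finset.Icc 1 N, c x * ‖z (n+1) x‖^2)
        - ∑ x ∈ Finset.Icc 1 N, c x * ‖z n (x-1)‖^2) := by
    rw [← Finset.mul_sum, Finset.sum_sub_distrib]
  rw [h1, h2]
  -- shift lemma
  obtain ⟨M, rfl⟩ : ∃ M, N = M + 1 := ⟨N - 1, (Nat.succ_pred_eq_of_pos hN).symm⟩
  have hshift : ∑ j ∈ Finset.Icc 1 (M+1), c j * ‖z n (j-1)‖^2
      = (∑ j ∈ Finset.Icc 1 (M+1), c (j+1) * ‖z n j‖^2)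
        - c (M+2) * ‖z n (M+1)‖^2 := by
    rw [← Finset.Ico_add_one_right_eq_Icc, Finset.sum_Ico_eq_sum_range, Finset.sum_Ico_eq_sum_range]
    simp only [Nat.add_sub_cancel]
    have l : ∑ i ∈ Finset.range (M+1), c (1+i) * ‖z n (1+i-1)‖^2
        = ∑ i ∈ Finset.range M, c (i+2) * ‖z n (i+1)‖^2 := by
      rw [Finset.sum_range_succ']
      simp only [hz0, norm_zero]
      have : ∀ i, c (1+(i+1)) * ‖z n (1+(i+1)-1)‖^2 = c (i+2) * ‖z n (i+1)‖^2 := by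
        intro i
        have e1 : 1+(i+1) = i+2 := by omega
        rw [e1, show i+2-1 = i+1 by omega]
      rw [Finset.sum_congr rfl fun i _ => this i]
      simp
    have r : ∑ i ∈ Finset.range (M+1), c (1+i+1) * ‖z n (1+i)‖^2
        = (∑ i ∈ Finset.range M, c (i+2) * ‖z n (i+1)‖^2) + c (M+2) * ‖z n (M+1)‖^2 := by
      rw [Finset.sum_range_succ]
      have : ∀ i, c (1+i+1) * ‖z n (1+i)‖^2 = c (i+2) * ‖z n (i+1)‖^2 := by
        intro i
        have e1 : 1+i+1 = i+2 := by omega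
        have e2 : 1+i = i+1 := by omega
        rw [e1, e2]
      rw [Finset.sum_congr rfl fun i _ => this i, this M]
    rw [l, r]; ring
  have hsub : ∑ j ∈ Finset.Icc 1 (M+1), (c (j+1) - c j) * ‖z n j‖^2
      = (∑ j ∈ Finset.Icc 1 (M+1), c (j+1) * ‖z n j‖^2)
        - ∑ j ∈ Finset.Icc 1 (M+1), c j * ‖z n j‖^2 := by
    rw [← Finset.sum_sub_distrib]; exact Finset.sum_congr rfl fun j _ => by ring
  rw [hshift, hsub]
  have hsplit : ∑ j ∈ Finset.Icc 1 (M+1), c j * (‖z (n+1) j‖^2 - ‖z n j‖^2)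
      = (∑ j ∈ Finset.Icc 1 (M+1), c j * ‖z (n+1) j‖^2)
        - ∑ j ∈ Finset.Icc 1 (M+1), c j * ‖z n j‖^2 := by
    rw [← Finset.sum_sub_distrib]; exact Finset.sum_congr rfl fun j _ => by ring
  rw [hsplit]
  have : (M:ℕ) + 1 + 1 = M + 2 := by omega
  rw [this]
  ring
end
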